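/- Let k be a positive integer, K > 0, M > 0, δ ∈ (0,1), and n ≥ 1 an integer. Let u : Δ → ℝ^k have all coordinates nonnegative and satisfy, for all p, q ∈ Δ: ‖u(p) − u(q)‖ ≤ K·‖p − q‖ and |⟨u(p), p⟩ − ⟨u(q), q⟩| ≤ K·‖p − q‖. Let p^e ∈ Δ be a symmetric Nash equilibrium for u, i.e., ⟨u(p^e), q⟩ ≤ ⟨u(p^e), p^e⟩ for all q ∈ Δ. Let (Ω, 𝓕, P) be a probability space and X : Ω → ℝ^k a random variable taking values in Δ with E‖X − p^e‖² ≤ M/n. Then P( for all q ∈ Δ, ⟨u(X), q⟩ ≤ ⟨u(X), X⟩ + n^{−δ/2} ) ≥ 1 − 4K²M·n^{δ−1}; that is, X is an n^{−δ/2}-approximate Nash equilibrium with probability at least 1 − 4K²M·n^{δ−1}. (The concluding step of the paper's Proposition 1, combining the approximate-equilibrium chain inequality with Markov's inequality.) -/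

import Mathlib

open scoped RealInnerProductSpace
open MeasureTheory

noncomputable section

/-- The standard simplex `Δ` in `ℝ^k`. -/
def stdSimplexE (k : ℕ) : Set (EuclideanSpace ℝ (Fin k)) :=
  {x | (∀ i, 0 ≤ x i) ∧ ∑ i, x i = 1}

lemma norm_le_one_of_mem {k : ℕ} {x : EuclideanSpace ℝ (Fin k)}
    (hx : x ∈ stdSimplexE k) : ‖x‖ ≤ 1 := by
  obtain ⟨h0, h1⟩ := hx
  rw [EuclideanSpace.norm_eq]
  refine Real.sqrt_le_one.mpr ?_
  calc ∑ i, ‖x i‖ ^ 2 ≤ ∑ i, x i := by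
        refine Finset.sum_le_sum fun i _ => ?_
        rw [Real.norm_eq_abs, sq_abs]
        have hle : x i ≤ 1 := h1 ▸ Finset.single_le_sum (fun j _ => h0 j) (Finset.mem_univ i)
        nlinarith [h0 i]
    _ = 1 := h1

/-- under the Lipschitz/nonnegativity assumptions on `u` and with
`p^e ∈ Δ` a symmetric Nash equilibrium, if a `Δ`-valued random variable `X`
satisfies `E‖X − p^e‖² ≤ M/n`, then with probability at least
`1 − 4K²M·n^{δ−1}`, `X` is an `n^{−δ/2}`-approximate Nash equilibrium. -/
theorem stmt13 (k : ℕ) (hk : 0 < k) (K M δ : ℝ) (hK : 0 < K) (hM : 0 < M)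
    (hδ : δ ∈ Set.Ioo (0 : ℝ) 1) (n : ℕ) (hn : 1 ≤ n)
    (u : EuclideanSpace ℝ (Fin k) → EuclideanSpace ℝ (Fin k))
    (hnn : ∀ p ∈ stdSimplexE k, ∀ i, 0 ≤ u p i)
    (hLip : ∀ p ∈ stdSimplexE k, ∀ q ∈ stdSimplexE k, ‖u p - u q‖ ≤ K * ‖p - q‖)
    (hLip' : ∀ p ∈ stdSimplexE k, ∀ q ∈ stdSimplexE k,
      |⟪u p, p⟫ - ⟪u q, q⟫| ≤ K * ‖p - q‖)
    (pe : EuclideanSpace ℝ (Fin k)) (hpe : pe ∈ stdSimplexE k)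
    (heq : ∀ q ∈ stdSimplexE k, ⟪u pe, q⟫ ≤ ⟪u pe, pe⟫)
    {Ω : Type} [MeasurableSpace Ω] (P : Measure Ω) [IsProbabilityMeasure P]
    (X : Ω → EuclideanSpace ℝ (Fin k)) (hXmeas : Measurable X)
    (hXΔ : ∀ ω, X ω ∈ stdSimplexE k)
    (hvar : ∫ ω, ‖X ω - pe‖ ^ 2 ∂P ≤ M / (n : ℝ)) :
    1 - 4 * K ^ 2 * M * (n : ℝ) ^ (δ - 1) ≤
      (P {ω | ∀ q ∈ stdSimplexE k,
        ⟪u (X ω), q⟫ ≤ ⟪u (X ω), X ω⟫ + (n : ℝ) ^ (-(δ / 2))}).toReal := by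
  have hn0 : (0 : ℝ) < n := by exact_mod_cast hn
  set ε : ℝ := (n : ℝ) ^ (-(δ / 2)) with hε
  have hε0 : 0 < ε := Real.rpow_pos_of_pos hn0 _
  set t : ℝ := ε / (2 * K) with htdef
  have ht0 : 0 < t := div_pos hε0 (by linarith)
  have ht2 : t ^ 2 = (n : ℝ) ^ (-δ) / (4 * K ^ 2) := by
    have : ε ^ 2 = (n : ℝ) ^ (-δ) := by
      rw [hε, sq, ← Real.rpow_add hn0]; ring_nf
    rw [htdef, div_pow, this]; ring_nf
  set G : Set Ω := {ω | ∀ q ∈ stdSimplexE k,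
      ⟪u (X ω), q⟫ ≤ ⟪u (X ω), X ω⟫ + ε} with hG
  set S : Set Ω := {ω | t ^ 2 ≤ ‖X ω - pe‖ ^ 2} with hS
  -- deterministic step
  have hdet : ∀ ω, ‖X ω - pe‖ ^ 2 < t ^ 2 → ω ∈ G := by
    intro ω hω q hq
    have hd : ‖X ω - pe‖ ≤ t := by
      nlinarith [norm_nonneg (X ω - pe), ht0]
    have hx := hXΔ ω
    have h1 : ⟪u (X ω) - u pe, q⟫ ≤ K * ‖X ω - pe‖ := by
      calc ⟪u (X ω) - u pe, q⟫ ≤ ‖u (X ω) - u pe‖ * ‖q‖ := real_inner_le_norm _ _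
        _ ≤ (K * ‖X ω - pe‖) * 1 := by
            refine mul_le_mul (hLip _ hx _ hpe) (norm_le_one_of_mem hq) (norm_nonneg _) ?_
            positivity
        _ = K * ‖X ω - pe‖ := by ring
    have h2 : ⟪u pe, pe⟫ - ⟪u (X ω), X ω⟫ ≤ K * ‖X ω - pe‖ := by
      have := hLip' _ hpe _ hx
      rw [abs_sub_comm] at this
      have := abs_le.mp this
      rw [norm_sub_rev]
      linarith [this.2]
    have h3 : ⟪u pe, q⟫ ≤ ⟪u pe, pe⟫ := heq q hq
    have hexp : ⟪u (X ω), q⟫ = ⟪u pe, q⟫ + ⟪u (X ω) - u pe, q⟫ := by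
      rw [inner_sub_left]; ring
    have hKt : 2 * K * ‖X ω - pe‖ ≤ ε := by
      have : 2 * K * t = ε := by rw [htdef]; field_simp
      nlinarith
    linarith
  -- Markov
  have hfmeas : Measurable fun ω => ‖X ω - pe‖ ^ 2 :=
    ((hXmeas.sub measurable_const).norm).pow_const 2
  have hfint : Integrable (fun ω => ‖X ω - pe‖ ^ 2) P := by
    refine (integrable_const (4 : ℝ)).mono' hfmeas.aestronglyMeasurable ?_
    refine ae_of_all _ fun ω => ?_
    have h1 : ‖X ω - pe‖ ≤ 2 := by
      calc ‖X ω - pe‖ ≤ ‖X ω‖ + ‖pe‖ := norm_sub_le _ _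
        _ ≤ 1 + 1 := add_le_add (norm_le_one_of_mem (hXΔ ω)) (norm_le_one_of_mem hpe)
        _ = 2 := by norm_num
    rw [Real.norm_eq_abs, abs_of_nonneg (by positivity)]
    nlinarith [norm_nonneg (X ω - pe)]
  have hmarkov := mul_meas_ge_le_integral_of_nonneg
    (μ := P) (f := fun ω => ‖X ω - pe‖ ^ 2)
    (ae_of_all _ fun ω => by positivity) hfint (t ^ 2)
  have hPS : (P S).toReal ≤ 4 * K ^ 2 * M * (n : ℝ) ^ (δ - 1) := by
    have ht2pos : 0 < t ^ 2 := by positivity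
    have h1 : (P S).toReal ≤ (M / n) / t ^ 2 := by
      rw [le_div_iff₀ ht2pos, mul_comm]
      exact hmarkov.trans hvar
    refine h1.trans (le_of_eq ?_)
    rw [ht2]
    have hrw : (n : ℝ) ^ (δ - 1) = (n : ℝ) ^ δ / n := by
      rw [Real.rpow_sub hn0, Real.rpow_one]
    have hneg : (n : ℝ) ^ (-δ) = ((n : ℝ) ^ δ)⁻¹ := Real.rpow_neg hn0.le δ
    have hδpos : (0:ℝ) < (n : ℝ) ^ δ := Real.rpow_pos_of_pos hn0 _
    rw [hrw, hneg]
    field_simp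
  -- combine
  have hsub : Gᶜ ⊆ S := fun ω hω => by
    by_contra h
    exact hω (hdet ω (lt_of_not_ge h))
  have hPGc : (P Gᶜ).toReal ≤ (P S).toReal :=
    ENNReal.toReal_mono (measure_ne_top _ _) (measure_mono hsub)
  have hone : (1 : ℝ) ≤ (P G).toReal + (P Gᶜ).toReal := by
    have h1 : (1 : ENNReal) = P Set.univ := (measure_univ (μ := P)).symm
    have h2 : P Set.univ ≤ P G + P Gᶜ := by
      rw [← Set.union_compl_self G] at *
      exact measure_union_le _ _
    have h3 : (1 : ENNReal) ≤ P G + P Gᶜ := h1 ▸ h2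
    calc (1 : ℝ) = (1 : ENNReal).toReal := by simp
      _ ≤ (P G + P Gᶜ).toReal := ENNReal.toReal_mono
          (by simp [ENNReal.add_ne_top, measure_ne_top]) h3
      _ = (P G).toReal + (P Gᶜ).toReal :=
          ENNReal.toReal_add (measure_ne_top _ _) (measure_ne_top _ _)
  linarith
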